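/- Let n be a positive integer and H : (Fin n → ℝ) → ℝ continuously differentiable. Given y, ŷ : Fin n → ℝ, for each index i define the grid-point-partitioned AVF discrete gradient component Ḡᵢ = ∫₀¹ ∂ᵢH(zᵢ(θ)) dθ, where zᵢ(θ) is the vector whose j-th coordinate equals ŷⱼ for j < i, equals θŷᵢ + (1−θ)yᵢ for j = i, and equals yⱼ for j > i. Then the telescoping discrete-gradient identity holds: Σᵢ Ḡᵢ · (ŷᵢ − yᵢ) = H(ŷ) − H(y). -/

import Mathlib

/-- Telescoping discrete-gradient identity of the grid-point-partitioned AVF method: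
with `zᵢ(θ)` interpolating coordinate `i` and carrying new values `ŷⱼ` for `j < i` and
old values `yⱼ` for `j > i`, one has `Σᵢ (∫₀¹ ∂ᵢH(zᵢ(θ)) dθ)(ŷᵢ − yᵢ) = H(ŷ) − H(y)`. -/
theorem gridpoint_avf_telescoping (n : ℕ) (hn : 0 < n)
    (H : (Fin n → ℝ) → ℝ) (hH : ContDiff ℝ 1 H)
    (y yh : Fin n → ℝ) :
    ∑ i : Fin n,
        (∫ θ in (0:ℝ)..1,
          fderiv ℝ H
            (fun j => if j < i then yh j
              else if j = i then θ * yh i + (1 - θ) * y i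
              else y j)
            (Pi.single i 1)) * (yh i - y i)
      = H yh - H y := by
  set F : ℕ → ℝ := fun k => H (fun j => if (j : ℕ) < k then yh j else y j) with hF
  have key : ∀ i : Fin n,
      (∫ θ in (0:ℝ)..1,
          fderiv ℝ H
            (fun j => if j < i then yh j
              else if j = i then θ * yh i + (1 - θ) * y i
              else y j)
            (Pi.single i 1)) * (yh i - y i) = F ((i : ℕ) + 1) - F i := by
    intro i
    set base : Fin n → ℝ := fun j => if j < i then yh j else y j with hbase
    set v : Fin n → ℝ := Pi.single i (yh i - y i) with hv
    have hγ : ∀ θ : ℝ,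
        (fun j => if j < i then yh j
          else if j = i then θ * yh i + (1 - θ) * y i
          else y j) = base + θ • v := by
      intro θ; funext j
      by_cases h1 : j < i
      · have : j ≠ i := ne_of_lt h1
        simp [hbase, hv, h1, Pi.single_eq_of_ne this]
      · by_cases h2 : j = i
        · subst h2
          simp [hbase, hv, h1]
          ring
        · simp [hbase, hv, h1, h2, Pi.single_eq_of_ne h2]
    have hder : ∀ θ ∈ Set.uIcc (0:ℝ) 1,
        HasDerivAt (fun t => H (base + t • v)) ((fderiv ℝ H (base + θ • v)) v) θ := by
      intro θ _
      have hline : HasDerivAt (fun t : ℝ => base + t • v) v θ := by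
        have := ((hasDerivAt_id θ).smul_const v).const_add base
        simpa using this
      exact ((hH.differentiable one_ne_zero (base + θ • v)).hasFDerivAt).comp_hasDerivAt θ hline
    have hcont : Continuous fun θ : ℝ => (fderiv ℝ H (base + θ • v)) v := by
      have h1 : Continuous fun θ : ℝ => base + θ • v := by continuity
      exact ((hH.continuous_fderiv one_ne_zero).comp h1).clm_apply continuous_const
    have hint : IntervalIntegrable (fun θ : ℝ => (fderiv ℝ H (base + θ • v)) v)
        MeasureTheory.volume 0 1 := hcont.intervalIntegrable _ _
    have hFTC : (∫ θ in (0:ℝ)..1, (fderiv ℝ H (base + θ • v)) v)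
        = H (base + (1:ℝ) • v) - H (base + (0:ℝ) • v) :=
      intervalIntegral.integral_eq_sub_of_hasDerivAt hder hint
    have hvsmul : v = (yh i - y i) • (Pi.single i 1 : Fin n → ℝ) := by
      funext j
      by_cases h : j = i
      · subst h; simp [hv]
      · simp [hv, Pi.single_eq_of_ne h]
    have happ : ∀ x : Fin n → ℝ,
        (fderiv ℝ H x) v = (yh i - y i) * (fderiv ℝ H x) (Pi.single i 1) := by
      intro x
      rw [hvsmul, map_smul, smul_eq_mul]
    have hend1 : base + (1:ℝ) • v = fun j : Fin n => if (j : ℕ) < (i : ℕ) + 1 then yh j else y j := by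
      funext j
      by_cases h1 : j < i
      · have hne : j ≠ i := ne_of_lt h1
        have : (j : ℕ) < (i : ℕ) + 1 := Nat.lt_succ_of_lt (Fin.lt_def.mp h1)
        simp [hbase, hv, h1, Pi.single_eq_of_ne hne, this]
      · by_cases h2 : j = i
        · subst h2
          simp [hbase, hv, h1]
        · have hlt : ¬ (j : ℕ) < (i : ℕ) + 1 := by
            intro hc
            rcases Nat.lt_succ_iff_lt_or_eq.mp hc with h | h
            · exact h1 (Fin.lt_def.mpr h)
            · exact h2 (Fin.ext h)
          simp [hbase, hv, h1, Pi.single_eq_of_ne h2, hlt]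
    have hend0 : base + (0:ℝ) • v = fun j : Fin n => if (j : ℕ) < (i : ℕ) then yh j else y j := by
      funext j
      show base j + (0:ℝ) • v j = _
      simp only [zero_smul, add_zero]
      rfl
    calc (∫ θ in (0:ℝ)..1,
          fderiv ℝ H
            (fun j => if j < i then yh j
              else if j = i then θ * yh i + (1 - θ) * y i
              else y j)
            (Pi.single i 1)) * (yh i - y i)
        = ∫ θ in (0:ℝ)..1, (yh i - y i) * (fderiv ℝ H (base + θ • v)) (Pi.single i 1) := by
          rw [intervalIntegral.integral_const_mul, mul_comm]
          congr 1
          simp only [hγ]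
      _ = ∫ θ in (0:ℝ)..1, (fderiv ℝ H (base + θ • v)) v := by
          congr 1; funext θ; rw [happ]
      _ = H (base + (1:ℝ) • v) - H (base + (0:ℝ) • v) := hFTC
      _ = F ((i : ℕ) + 1) - F i := by rw [hend1, hend0]
  rw [Finset.sum_congr rfl fun i _ => key i]
  have h1 : ∑ i : Fin n, (F ((i : ℕ) + 1) - F i) = ∑ k ∈ Finset.range n, (F (k + 1) - F k) := by
    exact Fin.sum_univ_eq_sum_range (fun k => F (k + 1) - F k) n
  rw [h1, Finset.sum_range_sub F]
  have e1 : (fun j : Fin n => if (j : ℕ) < n then yh j else y j) = yh := by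
    funext j; simp [j.isLt]
  have e0 : (fun j : Fin n => if (j : ℕ) < 0 then yh j else y j) = y := by
    funext j; simp
  simp only [hF, e1, e0]
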